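/- Let λ be a partition of n with largest part λ₁, and let μ be a partition of n' = n − λ₁ such that ᵗλ and ᵗμ are 2-transverse. Then μ = λ* = [λ₂, λ₃, …], the partition obtained from λ by deleting its first row. -/
import Mathlib


/-- A partition, encoded as a weakly decreasing function `ℕ → ℕ` (0-indexed parts)
that is eventually zero. -/
def IsPartition (f : ℕ → ℕ) : Prop := Antitone f ∧ ∃ N, ∀ i, N ≤ i → f i = 0

/-- The conjugate (transpose) partition: `conj f i = #{j : f j ≥ i+1}` (0-indexed,
so `conj f i` is the (i+1)-st column length, i.e. ᵗλ_{i+1}). -/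
noncomputable def conj (f : ℕ → ℕ) (i : ℕ) : ℕ := Nat.card {j : ℕ // i + 1 ≤ f j}

/-- Two partitions are close if corresponding parts differ by at most 1. -/
def Close (f g : ℕ → ℕ) : Prop := ∀ i, f i ≤ g i + 1 ∧ g i ≤ f i + 1

/-- Two partitions are 2-transverse: they are close and every positive common part
(at equal indices) occurs an even number of times. -/
def Transverse2 (f g : ℕ → ℕ) : Prop :=
  Close f g ∧ ∀ p, 0 < p → Even (Nat.card {i : ℕ // f i = p ∧ g i = p})

/-- The size |λ| of a partition: the (finite) sum of its parts. -/
noncomputable def psize (f : ℕ → ℕ) : ℕ := ∑ᶠ i, f i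

/-- Prepend a part to a partition. -/
def pcons (a : ℕ) (f : ℕ → ℕ) : ℕ → ℕ
  | 0 => a
  | (i+1) => f i

/-- `RemoveTwoHook ν μ` : the partition μ is obtained from ν by removing a 2-hook,
either two adjacent blocks in one row (type (1²)) or two adjacent blocks in one
column (type (2)), the result still being a Young diagram. -/
def RemoveTwoHook (ν μ : ℕ → ℕ) : Prop :=
  IsPartition ν ∧ IsPartition μ ∧
  ((∃ i, μ i + 2 = ν i ∧ ∀ j, j ≠ i → μ j = ν j) ∨
   (∃ i, μ i + 1 = ν i ∧ μ (i+1) + 1 = ν (i+1) ∧ ∀ j, j ≠ i → j ≠ i + 1 → μ j = ν j))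


/-- If `conj g m ≥ i+1` then `g i ≥ m+1`, for antitone `g` (contrapositive form). -/
lemma conj_le_of_lt_aux (g : ℕ → ℕ) (hg : Antitone g) (i m : ℕ) (h : g i < m + 1) :
    conj g m ≤ i := by
  have hsub : {j : ℕ | m + 1 ≤ g j} ⊆ Set.Iio i := by
    intro j hj
    simp only [Set.mem_setOf_eq] at hj
    simp only [Set.mem_Iio]
    by_contra hij
    push_neg at hij
    have := hg hij
    omega
  have h1 : conj g m = ({j : ℕ | m + 1 ≤ g j}).ncard := by
    rw [conj, ← Nat.card_coe_set_eq]
    rfl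
  have h2 : ({j : ℕ | m + 1 ≤ g j}).ncard ≤ (Set.Iio i).ncard :=
    Set.ncard_le_ncard hsub (Set.finite_Iio i)
  have h3 : (Set.Iio i).ncard = i := by
    rw [Set.ncard_eq_toFinset_card']; simp
  omega

/-- If `f i ≥ m+1` and `f` is antitone and eventually `0`, then `conj f m ≥ i+1`. -/
lemma le_conj_aux (f : ℕ → ℕ) (hfA : Antitone f) (N : ℕ) (hN : ∀ j, N ≤ j → f j = 0)
    (i m : ℕ) (h : m + 1 ≤ f i) : i + 1 ≤ conj f m := by
  have hsub : Set.Iic i ⊆ {j : ℕ | m + 1 ≤ f j} := by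
    intro j hj
    simp only [Set.mem_Iic] at hj
    simp only [Set.mem_setOf_eq]
    exact le_trans h (hfA hj)
  have hfin : ({j : ℕ | m + 1 ≤ f j}).Finite := by
    apply (Set.finite_Iio N).subset
    intro j hj
    simp only [Set.mem_setOf_eq] at hj
    simp only [Set.mem_Iio]
    by_contra hjN
    push_neg at hjN
    have := hN j hjN
    omega
  have h1 : conj f m = ({j : ℕ | m + 1 ≤ f j}).ncard := by
    rw [conj, ← Nat.card_coe_set_eq]
    rfl
  have h2 : (Set.Iic i).ncard ≤ ({j : ℕ | m + 1 ≤ f j}).ncard :=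
    Set.ncard_le_ncard hsub hfin
  have h3 : (Set.Iic i).ncard = i + 1 := by
    rw [Set.ncard_eq_toFinset_card']; simp
  omega

/-- `finsum` of an eventually-zero function is a finite range sum. -/
lemma psize_eq_sum (f : ℕ → ℕ) (N : ℕ) (hN : ∀ j, N ≤ j → f j = 0) :
    psize f = ∑ i ∈ Finset.range N, f i := by
  rw [psize]
  apply finsum_eq_finset_sum_of_support_subset
  intro j hj
  simp only [Function.mem_support] at hj
  simp only [Finset.coe_range, Set.mem_Iio]
  by_contra hjN
  push_neg at hjN
  exact hj (hN j hjN)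

/-- If |μ| = |λ| − λ₁ and ᵗλ, ᵗμ are 2-transverse, then μ = λ*. -/
theorem stmt4 (f μ : ℕ → ℕ) (hf : IsPartition f) (hμ : IsPartition μ)
    (hsize : psize μ + f 0 = psize f)
    (ht : Transverse2 (conj f) (conj μ)) : μ = fun i => f (i + 1) := by
  obtain ⟨hfA, N, hN⟩ := hf
  obtain ⟨hμA, M, hM⟩ := hμ
  obtain ⟨hclose, -⟩ := ht
  -- pointwise lower bound: f (i+1) ≤ μ i
  have key : ∀ i, f (i + 1) ≤ μ i := by
    intro i
    rcases Nat.eq_zero_or_pos (f (i + 1)) with h0 | hpos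
    · omega
    set m := f (i + 1) - 1 with hm
    have hm1 : m + 1 = f (i + 1) := by omega
    have h1 : i + 2 ≤ conj f m :=
      le_conj_aux f hfA N hN (i + 1) m (by omega)
    have h2 : i + 1 ≤ conj μ m := by
      have := (hclose m).1
      omega
    by_contra hc
    push_neg at hc
    have := conj_le_of_lt_aux μ hμA i m (by omega)
    omega
  -- size bookkeeping
  set K := max N M with hK
  have hfK : ∀ j, K ≤ j → f j = 0 := fun j hj => hN j (le_trans (le_max_left _ _) hj)
  have hμK : ∀ j, K ≤ j → μ j = 0 := fun j hj => hM j (le_trans (le_max_right _ _) hj)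
  have hgK : ∀ j, K ≤ j → f (j + 1) = 0 := fun j hj => hfK (j + 1) (by omega)
  have hsf : psize f = ∑ i ∈ Finset.range (K + 1), f i :=
    psize_eq_sum f (K + 1) (fun j hj => hfK j (by omega))
  have hsμ : psize μ = ∑ i ∈ Finset.range K, μ i := psize_eq_sum μ K hμK
  have hshift : ∑ i ∈ Finset.range (K + 1), f i
      = ∑ i ∈ Finset.range K, f (i + 1) + f 0 := Finset.sum_range_succ' f K
  have hsum_eq : ∑ i ∈ Finset.range K, f (i + 1) = ∑ i ∈ Finset.range K, μ i := by
    have hle : ∑ i ∈ Finset.range K, f (i + 1) ≤ ∑ i ∈ Finset.range K, μ i :=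
      Finset.sum_le_sum (fun i _ => key i)
    omega
  have heach := (Finset.sum_eq_sum_iff_of_le (fun i _ => key i)).1 hsum_eq
  funext i
  by_cases hi : i < K
  · exact ((heach i (Finset.mem_range.2 hi))).symm
  · push_neg at hi
    have := hμK i hi
    have := hgK i hi
    omega
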